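/- Let n ≥ 2, let Φ₁, …, Φ_{n-1} be independent random variables uniformly distributed on [0, π/2], and for 1 ≤ j ≤ n−1 define Λ_j = cos²(Φ_j)·∏_{i=1}^{j-1} sin²(Φ_i) and F_j = E[Λ_j · ln Λ_j]. Let a = ln 2 − 1/2. Then for every j with 0 ≤ j and j+1 ≤ n−1, the closed form F_{j+1} = −(j+1)·a / 2^j holds. -/

import Mathlib

open MeasureTheory Real intervalIntegral

/-- The uniform probability measure on the interval `[0, π/2]`. -/
noncomputable def uniformHalfPi : Measure ℝ :=
  ENNReal.ofReal (2 / Real.pi) • volume.restrict (Set.Icc 0 (Real.pi / 2))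

/-- The eigenvalue `Λ` with 0-based index `j`:
`Λ_j(φ) = cos²(φ j) ∏_{i<j} sin²(φ i)`. -/
noncomputable def Lam (m : ℕ) (j : Fin m) (φ : Fin m → ℝ) : ℝ :=
  Real.cos (φ j) ^ 2 * ∏ i ∈ Finset.univ.filter (fun i : Fin m => i < j), Real.sin (φ i) ^ 2

/-- The expectation `F_j = E[Λ_j ln Λ_j]` (0-based index `j`) with respect to the product of
uniform measures on `[0, π/2]`, modelling independent uniform spherical coordinates. -/
noncomputable def Fexp (m : ℕ) (j : Fin m) : ℝ :=
  ∫ φ : Fin m → ℝ, Lam m j φ * Real.log (Lam m j φ)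
    ∂(Measure.pi fun _ : Fin m => uniformHalfPi)


lemma hasDerivAt_mul_log' {x : ℝ} (hx0 : x ≠ 0) :
    HasDerivAt (fun y : ℝ => y * Real.log y) (Real.log x + 1) x := by
  have := (hasDerivAt_id x).mul (Real.hasDerivAt_log hx0)
  exact this.congr_deriv (by simp only [id, one_mul, mul_inv_cancel₀ hx0])

/-- integrability of `log ∘ sin` on `(0, π/2]`. -/
lemma intInt_log_sin : IntervalIntegrable (fun x => Real.log (Real.sin x)) volume 0 (Real.pi/2) := by
  have hpi := Real.pi_pos
  set c : ℝ := Real.log (2/Real.pi) with hc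
  have hg : IntegrableOn (fun x => -Real.log x - c) (Set.Ioc 0 (Real.pi/2)) volume := by
    have hcont : ContinuousOn (fun x => x - x * Real.log x - x * c) (Set.Icc 0 (Real.pi/2)) :=
      (continuous_id.sub Real.continuous_mul_log |>.sub (continuous_id.mul continuous_const)).continuousOn
    apply integrableOn_deriv_of_nonneg hcont
    · intro x hx
      have hx0 : x ≠ 0 := ne_of_gt hx.1
      have : HasDerivAt (fun x => x - x * Real.log x - x * c) (1 - (Real.log x + 1) - c) x := by
        exact (((hasDerivAt_id x).sub (hasDerivAt_mul_log' hx0)).sub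
          ((hasDerivAt_id x).mul_const c)).congr_deriv (by ring)
      convert this using 1; ring
    · intro x hx
      have h2 : Real.log x + c = Real.log (x * (2/Real.pi)) := by
        rw [Real.log_mul (ne_of_gt hx.1) (by positivity)]
      have hle : x * (2/Real.pi) ≤ 1 := by
        rw [mul_comm, div_mul_eq_mul_div, div_le_one hpi]
        nlinarith [hx.2]
      have h3 := Real.log_nonpos (mul_nonneg hx.1.le (by positivity)) hle
      nlinarith [h2, h3]
  -- now bound |log sin x| by the dominating function
  have hmeas : AEStronglyMeasurable (fun x => Real.log (Real.sin x))
      (volume.restrict (Set.Ioc 0 (Real.pi/2))) :=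
    (Real.measurable_log.comp Real.measurable_sin).aestronglyMeasurable
  have hIoc : IntegrableOn (fun x => Real.log (Real.sin x)) (Set.Ioc 0 (Real.pi/2)) volume := by
    apply hg.mono' hmeas
    filter_upwards [ae_restrict_mem measurableSet_Ioc] with x hx
    have hx1 : 0 < x := hx.1
    have hx2 : x ≤ Real.pi/2 := hx.2
    have hsin_pos : 0 < Real.sin x := Real.sin_pos_of_pos_of_lt_pi hx1 (by nlinarith)
    have hsin_le : Real.sin x ≤ 1 := Real.sin_le_one x
    have hlow : 2/Real.pi * x ≤ Real.sin x := Real.mul_le_sin (le_of_lt hx1) hx2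
    have hlog_le : Real.log (Real.sin x) ≤ 0 := Real.log_nonpos (le_of_lt hsin_pos) hsin_le
    have hlog_ge : Real.log (2/Real.pi * x) ≤ Real.log (Real.sin x) :=
      Real.log_le_log (by positivity) hlow
    rw [Real.norm_eq_abs, abs_of_nonpos hlog_le]
    rw [Real.log_mul (by positivity) (ne_of_gt hx1)] at hlog_ge
    linarith
  rw [intervalIntegrable_iff_integrableOn_Ioc_of_le (by positivity)]
  exact hIoc

lemma intInt_log_cos : IntervalIntegrable (fun x => Real.log (Real.cos x)) volume 0 (Real.pi/2) := by
  have h := intInt_log_sin.comp_sub_left (Real.pi/2)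
  simp only [Real.sin_pi_div_two_sub, sub_zero, sub_self] at h
  exact h.symm

lemma intInt_log_sin' : IntervalIntegrable (fun x => Real.log (Real.sin x)) volume (Real.pi/2) Real.pi := by
  have h := intInt_log_sin.comp_sub_left Real.pi
  simp only [Real.sin_pi_sub, sub_zero] at h
  rw [show Real.pi - Real.pi/2 = Real.pi/2 by ring] at h
  exact h.symm

lemma integral_log_cos_eq : ∫ x in (0:ℝ)..(Real.pi/2), Real.log (Real.cos x)
    = ∫ x in (0:ℝ)..(Real.pi/2), Real.log (Real.sin x) := by
  have h := intervalIntegral.integral_comp_sub_left (a := 0) (b := Real.pi/2)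
    (fun x => Real.log (Real.sin x)) (Real.pi/2)
  simp only [Real.sin_pi_div_two_sub, sub_zero, sub_self] at h
  rw [h, intervalIntegral.integral_symm]

lemma integral_log_sin_half :
    ∫ x in (0:ℝ)..(Real.pi/2), Real.log (Real.sin x) = -(Real.pi/2 * Real.log 2) := by
  have hpi := Real.pi_pos
  set L := ∫ x in (0:ℝ)..(Real.pi/2), Real.log (Real.sin x) with hL
  have h1 : ∫ x in (Real.pi/2:ℝ)..Real.pi, Real.log (Real.sin x) = L := by
    have h := intervalIntegral.integral_comp_sub_left (a := 0) (b := Real.pi/2)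
      (fun x => Real.log (Real.sin x)) Real.pi
    simp only [Real.sin_pi_sub, sub_zero] at h
    rw [show Real.pi - Real.pi/2 = Real.pi/2 by ring] at h
    rw [← h]
  have h2 : ∫ x in (0:ℝ)..Real.pi, Real.log (Real.sin x) = 2*L := by
    rw [← intervalIntegral.integral_add_adjacent_intervals intInt_log_sin intInt_log_sin', h1]
    ring
  have h3 : (2:ℝ) • ∫ x in (0:ℝ)..(Real.pi/2), Real.log (Real.sin (2*x))
      = ∫ x in (0:ℝ)..Real.pi, Real.log (Real.sin x) := by
    have h := intervalIntegral.smul_integral_comp_mul_left (a := 0) (b := Real.pi/2)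
      (fun x => Real.log (Real.sin x)) 2
    rw [mul_zero] at h
    rw [show (2:ℝ) * (Real.pi/2) = Real.pi by ring] at h
    exact h
  have h4 : ∫ x in (0:ℝ)..(Real.pi/2), Real.log (Real.sin (2*x))
      = ∫ x in (0:ℝ)..(Real.pi/2), (Real.log 2 + (Real.log (Real.sin x) + Real.log (Real.cos x))) := by
    apply intervalIntegral.integral_congr_ae
    have hm : (volume : Measure ℝ) {Real.pi/2} = 0 := volume_singleton
    filter_upwards [measure_eq_zero_iff_ae_notMem.mp hm] with x hx hxI
    rw [Set.uIoc_of_le (by positivity)] at hxI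
    have hx1 : 0 < x := hxI.1
    have hx2 : x < Real.pi/2 := lt_of_le_of_ne hxI.2 (by simpa using hx)
    have hs : 0 < Real.sin x := Real.sin_pos_of_pos_of_lt_pi hx1 (by linarith)
    have hcos : 0 < Real.cos x := Real.cos_pos_of_mem_Ioo ⟨by linarith, hx2⟩
    rw [Real.sin_two_mul,
      show (2:ℝ) * Real.sin x * Real.cos x = 2 * (Real.sin x * Real.cos x) by ring,
      Real.log_mul two_ne_zero (by positivity),
      Real.log_mul (ne_of_gt hs) (ne_of_gt hcos)]
  have h5 : ∫ x in (0:ℝ)..(Real.pi/2),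
      (Real.log 2 + (Real.log (Real.sin x) + Real.log (Real.cos x)))
      = Real.pi/2 * Real.log 2 + (L + L) := by
    rw [intervalIntegral.integral_add (intervalIntegrable_const)
        (intInt_log_sin.add intInt_log_cos),
      intervalIntegral.integral_add intInt_log_sin intInt_log_cos,
      intervalIntegral.integral_const, integral_log_cos_eq, ← hL]
    simp
  rw [h4, h5] at h3
  rw [h2] at h3
  rw [smul_eq_mul] at h3
  linarith

lemma integral_log_cos_half :
    ∫ x in (0:ℝ)..(Real.pi/2), Real.log (Real.cos x) = -(Real.pi/2 * Real.log 2) := by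
  rw [integral_log_cos_eq, integral_log_sin_half]

lemma intInt_cos2_log_cos :
    IntervalIntegrable (fun x => Real.cos (2*x) * Real.log (Real.cos x)) volume 0 (Real.pi/2) := by
  apply intInt_log_cos.mono_fun
    ((Real.measurable_cos.comp (measurable_const_mul 2)).mul
      (Real.measurable_log.comp Real.measurable_cos)).aestronglyMeasurable
  filter_upwards with x
  rw [Real.norm_eq_abs, Real.norm_eq_abs, Pi.mul_apply, abs_mul]
  exact mul_le_of_le_one_left (abs_nonneg _) (Real.abs_cos_le_one _)

lemma integral_cos2_log_cos :
    ∫ x in (0:ℝ)..(Real.pi/2), Real.cos (2*x) * Real.log (Real.cos x) = Real.pi/4 := by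
  have hpi := Real.pi_pos
  set f : ℝ → ℝ := fun x =>
    Real.sin x * (Real.cos x * Real.log (Real.cos x)) + x/2 - Real.sin (2*x)/4 with hf
  have hcont : Continuous f := by
    apply Continuous.sub
    · exact (Real.continuous_sin.mul
        (Real.continuous_mul_log.comp Real.continuous_cos)).add
        (continuous_id.div_const 2)
    · exact (Real.continuous_sin.comp (continuous_const.mul continuous_id)).div_const 4
  have hderiv : ∀ x ∈ Set.Ioo (0:ℝ) (Real.pi/2),
      HasDerivAt f (Real.cos (2*x) * Real.log (Real.cos x)) x := by
    intro x hx
    have hcos : 0 < Real.cos x := Real.cos_pos_of_mem_Ioo ⟨by linarith [hx.1], hx.2⟩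
    have d1 : HasDerivAt (fun x => Real.cos x * Real.log (Real.cos x))
        ((Real.log (Real.cos x) + 1) * (-Real.sin x)) x :=
      (hasDerivAt_mul_log' (ne_of_gt hcos)).comp x (Real.hasDerivAt_cos x)
    have d2 : HasDerivAt (fun x => Real.sin x * (Real.cos x * Real.log (Real.cos x)))
        (Real.cos x * (Real.cos x * Real.log (Real.cos x)) +
          Real.sin x * ((Real.log (Real.cos x) + 1) * (-Real.sin x))) x :=
      (Real.hasDerivAt_sin x).mul d1
    have d3 : HasDerivAt (fun x : ℝ => Real.sin (2*x)) (Real.cos (2*x) * 2) x := by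
      exact ((Real.hasDerivAt_sin (2*x)).comp x ((hasDerivAt_id x).const_mul 2)).congr_deriv (by ring)
    have d4 : HasDerivAt f
        (Real.cos x * (Real.cos x * Real.log (Real.cos x)) +
          Real.sin x * ((Real.log (Real.cos x) + 1) * (-Real.sin x)) + 1/2
          - Real.cos (2*x) * 2/4) x := by
      exact ((d2.add ((hasDerivAt_id x).div_const 2)).sub (d3.div_const 4)).congr_deriv (by ring)
    convert d4 using 1
    have h := Real.sin_sq_add_cos_sq x
    have h2 := Real.cos_two_mul x
    linear_combination (Real.log (Real.cos x) + 1/2) * h2 + (Real.log (Real.cos x) + 1) * h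
  have hF0 : Filter.Tendsto f (nhdsWithin 0 (Set.Ioi 0)) (nhds 0) := by
    have h0 := (hcont.tendsto 0).mono_left (nhdsWithin_le_nhds (s := Set.Ioi (0:ℝ)))
    simpa [hf] using h0
  have hF1 : Filter.Tendsto f (nhdsWithin (Real.pi/2) (Set.Iio (Real.pi/2)))
      (nhds (Real.pi/4)) := by
    have h0 := (hcont.tendsto (Real.pi/2)).mono_left
      (nhdsWithin_le_nhds (s := Set.Iio (Real.pi/2)))
    have hv : f (Real.pi/2) = Real.pi/4 := by
      simp [hf, Real.cos_pi_div_two, Real.sin_pi]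
      rw [show (2:ℝ) * (Real.pi/2) = Real.pi by ring, Real.sin_pi]
      ring
    rwa [hv] at h0
  have := intervalIntegral.integral_eq_sub_of_hasDerivAt_of_tendsto
    (by positivity : (0:ℝ) < Real.pi/2) hderiv intInt_cos2_log_cos hF0 hF1
  rw [this]; ring

lemma integral_cossq_log :
    ∫ x in (0:ℝ)..(Real.pi/2), Real.cos x^2 * Real.log (Real.cos x^2)
      = Real.pi/4 - Real.pi/2 * Real.log 2 := by
  have hEq : ∀ x : ℝ, Real.cos x^2 * Real.log (Real.cos x^2)
      = Real.cos (2*x) * Real.log (Real.cos x) + Real.log (Real.cos x) := by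
    intro x
    rw [show Real.cos x^2 = Real.cos x^(2:ℕ) by norm_num, Real.log_pow, Real.cos_two_mul]
    push_cast
    ring
  simp only [hEq]
  rw [intervalIntegral.integral_add intInt_cos2_log_cos intInt_log_cos,
    integral_cos2_log_cos, integral_log_cos_half]
  ring

lemma integral_sinsq_log :
    ∫ x in (0:ℝ)..(Real.pi/2), Real.sin x^2 * Real.log (Real.sin x^2)
      = Real.pi/4 - Real.pi/2 * Real.log 2 := by
  have h := intervalIntegral.integral_comp_sub_left (a := 0) (b := Real.pi/2)
    (fun x => Real.cos x^2 * Real.log (Real.cos x^2)) (Real.pi/2)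
  simp only [Real.cos_pi_div_two_sub, sub_zero, sub_self] at h
  rw [h, integral_cossq_log]

instance uniformHalfPi.isProbabilityMeasure : IsProbabilityMeasure uniformHalfPi := by
  constructor
  rw [uniformHalfPi]
  have hpi := Real.pi_pos
  rw [Measure.smul_apply, Measure.restrict_apply MeasurableSet.univ, Set.univ_inter,
    Real.volume_Icc, smul_eq_mul, ← ENNReal.ofReal_mul (by positivity)]
  rw [show 2 / Real.pi * (Real.pi / 2 - 0) = 1 by field_simp; ring]
  exact ENNReal.ofReal_one

lemma integral_uniformHalfPi (g : ℝ → ℝ) :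
    ∫ x, g x ∂uniformHalfPi = (2 / Real.pi) * ∫ x in (0:ℝ)..(Real.pi/2), g x := by
  have hpi := Real.pi_pos
  rw [uniformHalfPi, MeasureTheory.integral_smul_measure, ENNReal.toReal_ofReal (by positivity),
    intervalIntegral.integral_of_le (by positivity), ← MeasureTheory.integral_Icc_eq_integral_Ioc,
    smul_eq_mul]

lemma integral_pi_prod {n : ℕ} (μ : Measure ℝ) [SigmaFinite μ] (f : Fin n → ℝ → ℝ) :
    ∫ x : Fin n → ℝ, ∏ i, f i (x i) ∂(Measure.pi fun _ => μ) = ∏ i, ∫ x, f i x ∂μ := by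
  induction n with
  | zero =>
    simp only [Finset.univ_eq_empty, Finset.prod_empty]
    rw [MeasureTheory.integral_const]
    simp [measureReal_def, Measure.pi_univ]
  | succ n ih =>
    calc
      ∫ x : Fin (n+1) → ℝ, ∏ i, f i (x i) ∂(Measure.pi fun _ => μ)
          = ∫ x : ℝ × (Fin n → ℝ), f 0 x.1 * ∏ i : Fin n, f (Fin.succ i) (x.2 i)
            ∂(μ.prod (Measure.pi fun _ => μ)) := by
        rw [← ((measurePreserving_piFinSuccAbove (fun _ : Fin (n+1) => μ) 0).symm).integral_comp']
        simp_rw [MeasurableEquiv.piFinSuccAbove_symm_apply, Fin.insertNthEquiv,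
          Fin.prod_univ_succ, Equiv.coe_fn_mk]
        simp [Fin.insertNth_zero]
      _ = (∫ x, f 0 x ∂μ) * ∏ i : Fin n, ∫ x, f (Fin.succ i) x ∂μ := by
        rw [← ih fun i => f (Fin.succ i), ← integral_prod_mul]
      _ = ∏ i, ∫ x, f i x ∂μ := by rw [Fin.prod_univ_succ]


lemma abs_mul_log_le_one {t : ℝ} (h0 : 0 ≤ t) (h1 : t ≤ 1) : |t * Real.log t| ≤ 1 := by
  rcases eq_or_lt_of_le h0 with h | h
  · simp [← h]
  · rw [mul_comm]; exact (Real.abs_log_mul_self_lt t h h1).le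

lemma prod_mul_log {m : ℕ} (g : Fin m → ℝ) :
    (∏ k, g k) * Real.log (∏ k, g k)
      = ∑ i, ∏ k, (if k = i then g k * Real.log (g k) else g k) := by
  by_cases h : ∀ k, g k ≠ 0
  · rw [Real.log_prod (fun k _ => h k), Finset.mul_sum]
    apply Finset.sum_congr rfl
    intro i _
    have e1 : (∏ k, (if k = i then g k * Real.log (g k) else g k))
        = (g i * Real.log (g i)) * ∏ k ∈ Finset.univ.erase i, g k := by
      rw [← Finset.mul_prod_erase Finset.univ _ (Finset.mem_univ i), if_pos rfl]
      congr 1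
      exact Finset.prod_congr rfl fun k hk => by rw [if_neg (Finset.ne_of_mem_erase hk)]
    rw [e1, ← Finset.mul_prod_erase Finset.univ g (Finset.mem_univ i)]
    ring
  · push_neg at h
    obtain ⟨k0, hk0⟩ := h
    rw [Finset.prod_eq_zero (Finset.mem_univ k0) hk0, zero_mul]
    symm
    apply Finset.sum_eq_zero
    intro i _
    by_cases hik : i = k0
    · subst hik
      exact Finset.prod_eq_zero (Finset.mem_univ i) (by rw [if_pos rfl, hk0, zero_mul])
    · exact Finset.prod_eq_zero (Finset.mem_univ k0)
        (by rw [if_neg (fun hc => hik hc.symm), hk0])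


lemma int_u_one : ∫ x, (1:ℝ) ∂uniformHalfPi = 1 := by simp

lemma int_u_cos_sq : ∫ x, Real.cos x ^ 2 ∂uniformHalfPi = 1/2 := by
  have hpi := Real.pi_pos
  rw [integral_uniformHalfPi, integral_cos_sq]
  simp [Real.cos_pi_div_two]
  field_simp

lemma int_u_sin_sq : ∫ x, Real.sin x ^ 2 ∂uniformHalfPi = 1/2 := by
  have hpi := Real.pi_pos
  rw [integral_uniformHalfPi, integral_sin_sq]
  simp [Real.cos_pi_div_two]
  field_simp

lemma int_u_cos_sq_log :
    ∫ x, Real.cos x ^ 2 * Real.log (Real.cos x ^ 2) ∂uniformHalfPi = 1/2 - Real.log 2 := by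
  have hpi := Real.pi_pos
  rw [integral_uniformHalfPi, integral_cossq_log]
  field_simp
  ring

lemma int_u_sin_sq_log :
    ∫ x, Real.sin x ^ 2 * Real.log (Real.sin x ^ 2) ∂uniformHalfPi = 1/2 - Real.log 2 := by
  have hpi := Real.pi_pos
  rw [integral_uniformHalfPi, integral_sinsq_log]
  field_simp
  ring

/-- The per-coordinate factor functions. -/
noncomputable def Ffun (m : ℕ) (jf : Fin m) (k : Fin m) (x : ℝ) : ℝ :=
  if k = jf then Real.cos x ^ 2 else if k < jf then Real.sin x ^ 2 else 1

/-- The per-coordinate factor with the logarithmic weight at position `i`. -/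
noncomputable def Hfun (m : ℕ) (jf : Fin m) (i k : Fin m) (x : ℝ) : ℝ :=
  if k = i then Ffun m jf k x * Real.log (Ffun m jf k x) else Ffun m jf k x

lemma Ffun_continuous (m : ℕ) (jf k : Fin m) : Continuous (Ffun m jf k) := by
  unfold Ffun
  by_cases h1 : k = jf
  · simp only [if_pos h1]; fun_prop
  · by_cases h2 : k < jf
    · simp only [if_neg h1, if_pos h2]; fun_prop
    · simp only [if_neg h1, if_neg h2]; exact continuous_const

lemma Ffun_mem (m : ℕ) (jf k : Fin m) (x : ℝ) : 0 ≤ Ffun m jf k x ∧ Ffun m jf k x ≤ 1 := by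
  unfold Ffun
  split_ifs
  · exact ⟨sq_nonneg _, Real.cos_sq_le_one x⟩
  · exact ⟨sq_nonneg _, Real.sin_sq_le_one x⟩
  · exact ⟨zero_le_one, le_refl 1⟩

lemma Hfun_continuous (m : ℕ) (jf i k : Fin m) : Continuous (Hfun m jf i k) := by
  unfold Hfun
  by_cases h1 : k = i
  · simp only [if_pos h1]; exact Real.continuous_mul_log.comp (Ffun_continuous m jf k)
  · simp only [if_neg h1]; exact Ffun_continuous m jf k

lemma Hfun_abs_le_one (m : ℕ) (jf i k : Fin m) (x : ℝ) : |Hfun m jf i k x| ≤ 1 := by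
  obtain ⟨h0, h1⟩ := Ffun_mem m jf k x
  unfold Hfun
  split_ifs
  · exact abs_mul_log_le_one h0 h1
  · rw [abs_of_nonneg h0]; exact h1

lemma Lam_eq_prod (m : ℕ) (jf : Fin m) (φ : Fin m → ℝ) :
    Lam m jf φ = ∏ k, Ffun m jf k (φ k) := by
  rw [Lam, ← Finset.mul_prod_erase Finset.univ _ (Finset.mem_univ jf)]
  rw [show Ffun m jf jf (φ jf) = Real.cos (φ jf) ^ 2 from by rw [Ffun, if_pos rfl]]
  congr 1
  have e1 : ∏ k ∈ Finset.univ.erase jf, Ffun m jf k (φ k)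
      = ∏ k ∈ Finset.univ.erase jf, (if k < jf then Real.sin (φ k) ^ 2 else 1) :=
    Finset.prod_congr rfl fun k hk => by
      rw [Ffun, if_neg (Finset.ne_of_mem_erase hk)]
  rw [e1, Finset.prod_ite, Finset.prod_const_one, mul_one]
  congr 1
  rw [Finset.filter_erase, Finset.erase_eq_of_notMem (by simp)]

lemma integrand_eq (m : ℕ) (jf : Fin m) (φ : Fin m → ℝ) :
    Lam m jf φ * Real.log (Lam m jf φ) = ∑ i, ∏ k, Hfun m jf i k (φ k) := by
  rw [Lam_eq_prod m jf φ]
  exact prod_mul_log (fun k => Ffun m jf k (φ k))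

lemma not_le_of_cases {m : ℕ} {k jf : Fin m} (h1 : k ≠ jf) (h2 : ¬ k < jf) : ¬ k ≤ jf :=
  fun hle => (lt_or_eq_of_le hle).elim h2 h1

lemma int_Hfun (m : ℕ) (jf i k : Fin m) :
    ∫ x, Hfun m jf i k x ∂uniformHalfPi
      = if k = i then (if k ≤ jf then 1/2 - Real.log 2 else 0)
        else (if k ≤ jf then (1/2 : ℝ) else 1) := by
  unfold Hfun Ffun
  by_cases h2 : k = i
  · by_cases h1 : k = jf
    · simp only [if_pos h2, if_pos h1, if_pos (le_of_eq h1)]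
      exact int_u_cos_sq_log
    · by_cases h3 : k < jf
      · simp only [if_pos h2, if_neg h1, if_pos h3, if_pos (le_of_lt h3)]
        exact int_u_sin_sq_log
      · simp only [if_pos h2, if_neg h1, if_neg h3, if_neg (not_le_of_cases h1 h3)]
        simp
  · by_cases h1 : k = jf
    · simp only [if_neg h2, if_pos h1, if_pos (le_of_eq h1)]
      exact int_u_cos_sq
    · by_cases h3 : k < jf
      · simp only [if_neg h2, if_neg h1, if_pos h3, if_pos (le_of_lt h3)]
        exact int_u_sin_sq
      · simp only [if_neg h2, if_neg h1, if_neg h3, if_neg (not_le_of_cases h1 h3)]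
        exact int_u_one

lemma key (m : ℕ) (jf : Fin m) :
    Fexp m jf = -(((jf : ℕ) + 1 : ℝ) * (Real.log 2 - 1 / 2)) / 2 ^ (jf : ℕ) := by
  have hint : ∀ i ∈ Finset.univ, Integrable (fun φ : Fin m → ℝ => ∏ k, Hfun m jf i k (φ k))
      (Measure.pi fun _ : Fin m => uniformHalfPi) := by
    intro i _
    refine (integrable_const (1:ℝ)).mono' ?_ (Filter.Eventually.of_forall fun φ => ?_)
    · exact (continuous_finset_prod Finset.univ fun k _ =>
        (Hfun_continuous m jf i k).comp (continuous_apply k)).aestronglyMeasurable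
    · rw [Real.norm_eq_abs, Finset.abs_prod]
      exact Finset.prod_le_one (fun k _ => abs_nonneg _)
        (fun k _ => Hfun_abs_le_one m jf i k (φ k))
  have h1 : Fexp m jf = ∑ i, ∏ k, ∫ x, Hfun m jf i k x ∂uniformHalfPi := by
    rw [Fexp]
    simp only [integrand_eq]
    rw [integral_finset_sum Finset.univ hint]
    exact Finset.sum_congr rfl fun i _ => integral_pi_prod uniformHalfPi (Hfun m jf i)
  rw [h1]
  simp only [int_Hfun]
  -- now pure algebra
  have hIic : Finset.univ.filter (fun k : Fin m => k ≤ jf) = Finset.Iic jf := by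
    ext k; simp
  have hcard : (Finset.univ.filter (fun k : Fin m => k ≤ jf)).card = (jf : ℕ) + 1 := by
    rw [hIic, Fin.card_Iic]
  have hterm : ∀ i : Fin m,
      (∏ k, (if k = i then (if k ≤ jf then 1/2 - Real.log 2 else 0)
        else (if k ≤ jf then (1/2 : ℝ) else 1)))
      = if i ≤ jf then (1/2 - Real.log 2) * (1/2 : ℝ) ^ (jf : ℕ) else 0 := by
    intro i
    by_cases hi : i ≤ jf
    · rw [if_pos hi, ← Finset.mul_prod_erase Finset.univ _ (Finset.mem_univ i),
        if_pos rfl, if_pos hi]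
      congr 1
      have e1 : ∏ k ∈ Finset.univ.erase i,
          (if k = i then (if k ≤ jf then 1/2 - Real.log 2 else 0)
            else (if k ≤ jf then (1/2 : ℝ) else 1))
          = ∏ k ∈ Finset.univ.erase i, (if k ≤ jf then (1/2 : ℝ) else 1) :=
        Finset.prod_congr rfl fun k hk => by rw [if_neg (Finset.ne_of_mem_erase hk)]
      rw [e1, Finset.prod_ite, Finset.prod_const, Finset.prod_const, one_pow, mul_one]
      congr 1
      have e2 : (Finset.univ.erase i).filter (fun k : Fin m => k ≤ jf)
          = (Finset.univ.filter (fun k : Fin m => k ≤ jf)).erase i := by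
        ext k
        simp only [Finset.mem_filter, Finset.mem_erase, Finset.mem_univ, true_and]
        tauto
      rw [e2, Finset.card_erase_of_mem (by simp [hi]), hcard]
      omega
    · rw [if_neg hi]
      apply Finset.prod_eq_zero (Finset.mem_univ i)
      rw [if_pos rfl, if_neg hi]
  simp only [hterm]
  rw [Finset.sum_ite, Finset.sum_const, Finset.sum_const, smul_zero, add_zero, hcard]
  rw [nsmul_eq_mul]
  push_cast
  rw [one_div, inv_pow]
  have h2 : (2:ℝ) ^ (jf : ℕ) ≠ 0 := by positivity
  field_simp
  ring

/-- For `0 ≤ j` with `j + 1 ≤ n − 1`, the closed form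
`F_{j+1} = −(j+1)·a / 2^j` holds, where `a = ln 2 − 1/2`.  In 0-based indices, the paper's
`F_{j+1}` is `Fexp (n-1) ⟨j, _⟩`. -/
theorem stmt_12 (n : ℕ) (hn : 2 ≤ n) (j : ℕ) (hj : j + 1 ≤ n - 1) :
    Fexp (n - 1) ⟨j, by omega⟩ =
      -((j + 1 : ℝ) * (Real.log 2 - 1 / 2)) / 2 ^ j := by
  exact key (n - 1) ⟨j, by omega⟩
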